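/- Let A and E be m×n complex matrices with m ≥ n, rank(A) = n, and Δ = ‖E‖·‖A⁺‖ < 1 (so that A+E also has rank n). Then the matrix H = (A+E)⁺ − A⁺ satisfies ‖H‖ ≤ √2 · (Δ/(1 − Δ)) · ‖A⁺‖. -/

import Mathlib

set_option maxHeartbeats 1000000

open scoped Matrix Matrix.Norms.L2Operator

/-- Moore–Penrose inverse of a full-column-rank matrix: `K⁺ = (KᴴK)⁻¹Kᴴ`. -/
noncomputable def pinv {m n : ℕ} (A : Matrix (Fin m) (Fin n) ℂ) : Matrix (Fin n) (Fin m) ℂ :=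
  (Aᴴ * A)⁻¹ * Aᴴ

namespace WedinAux

open Matrix

variable {a b c m n : ℕ}

lemma apply_norm_le (M : Matrix (Fin a) (Fin b) ℂ) (x : EuclideanSpace ℂ (Fin b)) :
    ‖toEuclideanLin M x‖ ≤ ‖M‖ * ‖x‖ := by
  rw [Matrix.l2_opNorm_def]; exact ((toEuclideanLin (𝕜 := ℂ) (m := Fin a) (n := Fin b)).trans LinearMap.toContinuousLinearMap M).le_opNorm x

lemma norm_le_of_forall (M : Matrix (Fin a) (Fin b) ℂ) {c : ℝ} (hc : 0 ≤ c)
    (h : ∀ x : EuclideanSpace ℂ (Fin b), ‖toEuclideanLin M x‖ ≤ c * ‖x‖) : ‖M‖ ≤ c := by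
  rw [Matrix.l2_opNorm_def]
  exact ContinuousLinearMap.opNorm_le_bound _ hc (by simpa using h)

lemma toEuclideanLin_mul (M : Matrix (Fin a) (Fin b) ℂ) (N : Matrix (Fin b) (Fin c) ℂ)
    (x : EuclideanSpace ℂ (Fin c)) :
    toEuclideanLin (M * N) x = toEuclideanLin M (toEuclideanLin N x) := by
  simp [Matrix.toEuclideanLin_apply, Matrix.mulVec_mulVec]

lemma toEuclideanLin_one (x : EuclideanSpace ℂ (Fin a)) :
    toEuclideanLin (1 : Matrix (Fin a) (Fin a) ℂ) x = x := by
  simp [Matrix.toEuclideanLin_apply, Matrix.one_mulVec]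

lemma inner_conjT (M : Matrix (Fin a) (Fin b) ℂ) (x : EuclideanSpace ℂ (Fin a))
    (y : EuclideanSpace ℂ (Fin b)) :
    (inner ℂ (toEuclideanLin Mᴴ x) y : ℂ) = inner ℂ x (toEuclideanLin M y) := by
  rw [Matrix.toEuclideanLin_conjTranspose_eq_adjoint]
  exact LinearMap.adjoint_inner_left _ _ _

lemma inner_self_mul (B : Matrix (Fin a) (Fin b) ℂ) (x : EuclideanSpace ℂ (Fin b)) :
    (inner ℂ x (toEuclideanLin (Bᴴ * B) x) : ℂ) = (‖toEuclideanLin B x‖ : ℂ) ^ 2 := by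
  rw [toEuclideanLin_mul, Matrix.toEuclideanLin_conjTranspose_eq_adjoint,
    LinearMap.adjoint_inner_right, inner_self_eq_norm_sq_to_K]
  norm_cast

lemma pinv_mul (X : Matrix (Fin m) (Fin n) ℂ) (hX : IsUnit (Xᴴ * X)) :
    pinv X * X = 1 := by
  rw [pinv, Matrix.mul_assoc, Matrix.nonsing_inv_mul _ ((Matrix.isUnit_iff_isUnit_det _).1 hX)]

lemma conjT_proj (X : Matrix (Fin m) (Fin n) ℂ) (hX : IsUnit (Xᴴ * X)) :
    Xᴴ * (1 - X * pinv X) = 0 := by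
  have h : Xᴴ * X * ((Xᴴ * X)⁻¹ * Xᴴ) = Xᴴ := by
    rw [← Matrix.mul_assoc, Matrix.mul_nonsing_inv _ ((Matrix.isUnit_iff_isUnit_det _).1 hX),
      Matrix.one_mul]
  rw [pinv, Matrix.mul_sub, Matrix.mul_one, ← Matrix.mul_assoc Xᴴ X, h, sub_self]

lemma pinv_proj (X : Matrix (Fin m) (Fin n) ℂ) (hX : IsUnit (Xᴴ * X)) :
    pinv X * (1 - X * pinv X) = 0 := by
  nth_rewrite 1 [pinv]
  rw [Matrix.mul_assoc, conjT_proj X hX, Matrix.mul_zero]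

lemma proj_herm (X : Matrix (Fin m) (Fin n) ℂ) :
    (1 - X * pinv X)ᴴ = 1 - X * pinv X := by
  simp [pinv, Matrix.conjTranspose_mul, Matrix.conjTranspose_nonsing_inv, Matrix.mul_assoc]

lemma proj_idem (X : Matrix (Fin m) (Fin n) ℂ) (hX : IsUnit (Xᴴ * X)) :
    (1 - X * pinv X) * (1 - X * pinv X) = 1 - X * pinv X := by
  have h : X * pinv X * (X * pinv X) = X * pinv X := by
    rw [Matrix.mul_assoc X (pinv X), ← Matrix.mul_assoc (pinv X), pinv_mul X hX,
      Matrix.one_mul]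
  rw [Matrix.sub_mul, Matrix.one_mul, Matrix.mul_sub, Matrix.mul_one, h, sub_self, sub_zero]

lemma proj_norm_le (X : Matrix (Fin m) (Fin n) ℂ) (hX : IsUnit (Xᴴ * X)) :
    ‖(1 : Matrix (Fin m) (Fin m) ℂ) - X * pinv X‖ ≤ 1 := by
  have h1 : ‖(1 : Matrix (Fin m) (Fin m) ℂ) - X * pinv X‖ *
      ‖(1 : Matrix (Fin m) (Fin m) ℂ) - X * pinv X‖ =
      ‖(1 : Matrix (Fin m) (Fin m) ℂ) - X * pinv X‖ := by
    rw [← Matrix.l2_opNorm_conjTranspose_mul_self, proj_herm, proj_idem X hX]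
  nlinarith [norm_nonneg ((1 : Matrix (Fin m) (Fin m) ℂ) - X * pinv X)]

lemma key_identity (X Y : Matrix (Fin m) (Fin n) ℂ) (hX : IsUnit (Xᴴ * X))
    (hY : IsUnit (Yᴴ * Y)) :
    pinv Y - pinv X =
      -(pinv Y * (Y - X) * pinv X) + (Yᴴ * Y)⁻¹ * (Y - X)ᴴ * (1 - X * pinv X) := by
  have h1 : pinv Y * Y = 1 := pinv_mul Y hY
  have h2 : (Yᴴ * Y)⁻¹ * Yᴴ * (1 - X * pinv X) = pinv Y - pinv Y * (X * pinv X) := by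
    rw [← pinv, Matrix.mul_sub, Matrix.mul_one]
  have h3 : (Yᴴ * Y)⁻¹ * Xᴴ * (1 - X * pinv X) = 0 := by
    rw [Matrix.mul_assoc, conjT_proj X hX, Matrix.mul_zero]
  have h4 : pinv Y * (Y - X) * pinv X = pinv X - pinv Y * (X * pinv X) := by
    rw [Matrix.mul_sub, Matrix.sub_mul, h1, Matrix.one_mul, Matrix.mul_assoc]
  rw [Matrix.conjTranspose_sub, Matrix.mul_sub ((Yᴴ * Y)⁻¹), Matrix.sub_mul, h2, h3, h4]
  abel

lemma orth (X Y : Matrix (Fin m) (Fin n) ℂ) (hX : IsUnit (Xᴴ * X)) :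
    -(pinv Y * (Y - X) * pinv X) * ((Yᴴ * Y)⁻¹ * (Y - X)ᴴ * (1 - X * pinv X))ᴴ = 0 := by
  have hpr : (pinv X) * (1 - X * pinv X)ᴴ = 0 := by
    rw [proj_herm, pinv_proj X hX]
  rw [Matrix.conjTranspose_mul, Matrix.conjTranspose_mul, Matrix.neg_mul,
    Matrix.mul_assoc (pinv Y * (Y - X)), ← Matrix.mul_assoc (pinv X), hpr, Matrix.zero_mul,
    Matrix.mul_zero, neg_zero]

lemma pinv_sq_norm (X : Matrix (Fin m) (Fin n) ℂ) (hX : IsUnit (Xᴴ * X)) :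
    ‖(Xᴴ * X)⁻¹‖ = ‖pinv X‖ * ‖pinv X‖ := by
  have h : pinv X * (pinv X)ᴴ = (Xᴴ * X)⁻¹ := by
    have hd := (Matrix.isUnit_iff_isUnit_det _).1 hX
    rw [pinv, Matrix.conjTranspose_mul, Matrix.conjTranspose_conjTranspose,
      Matrix.conjTranspose_nonsing_inv, Matrix.conjTranspose_mul,
      Matrix.conjTranspose_conjTranspose, Matrix.mul_assoc, ← Matrix.mul_assoc Xᴴ,
      ← Matrix.mul_assoc ((Xᴴ*X)⁻¹), Matrix.nonsing_inv_mul _ hd, Matrix.one_mul]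
  rw [← h]
  calc ‖pinv X * (pinv X)ᴴ‖ = ‖((pinv X)ᴴ)ᴴ * (pinv X)ᴴ‖ := by
        rw [Matrix.conjTranspose_conjTranspose]
    _ = ‖(pinv X)ᴴ‖ * ‖(pinv X)ᴴ‖ := Matrix.l2_opNorm_conjTranspose_mul_self _
    _ = ‖pinv X‖ * ‖pinv X‖ := by rw [Matrix.l2_opNorm_conjTranspose]

/-- ‖S + T‖² ≤ ‖S‖² + ‖T‖² when `S * Tᴴ = 0`. -/
lemma orth_norm (S T : Matrix (Fin b) (Fin a) ℂ) (h : S * Tᴴ = 0) :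
    ‖S + T‖ ^ 2 ≤ ‖S‖ ^ 2 + ‖T‖ ^ 2 := by
  have hc : (0:ℝ) ≤ ‖S‖ ^ 2 + ‖T‖ ^ 2 := by positivity
  have key : ‖(S + T)ᴴ‖ ≤ Real.sqrt (‖S‖ ^ 2 + ‖T‖ ^ 2) := by
    apply norm_le_of_forall _ (Real.sqrt_nonneg _)
    intro y
    have horth : (inner ℂ (toEuclideanLin Sᴴ y) (toEuclideanLin Tᴴ y) : ℂ) = 0 := by
      rw [inner_conjT, ← toEuclideanLin_mul, h]
      simp [Matrix.toEuclideanLin_apply, Matrix.zero_mulVec]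
    have hsum : toEuclideanLin (S + T)ᴴ y = toEuclideanLin Sᴴ y + toEuclideanLin Tᴴ y := by
      rw [Matrix.conjTranspose_add, map_add]; rfl
    have hpy : ‖toEuclideanLin (S + T)ᴴ y‖ ^ 2
        = ‖toEuclideanLin Sᴴ y‖ ^ 2 + ‖toEuclideanLin Tᴴ y‖ ^ 2 := by
      rw [hsum, @norm_add_sq ℂ _ _ _ _ , horth]
      simp
    have hb : ‖toEuclideanLin (S + T)ᴴ y‖ ^ 2 ≤ (‖S‖ ^ 2 + ‖T‖ ^ 2) * ‖y‖ ^ 2 := by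
      rw [hpy]
      have h1 := apply_norm_le Sᴴ y
      have h2 := apply_norm_le Tᴴ y
      have h1' : ‖toEuclideanLin Sᴴ y‖ ^ 2 ≤ (‖Sᴴ‖ * ‖y‖) ^ 2 := by
        apply pow_le_pow_left₀ (norm_nonneg _) h1
      have h2' : ‖toEuclideanLin Tᴴ y‖ ^ 2 ≤ (‖Tᴴ‖ * ‖y‖) ^ 2 := by
        apply pow_le_pow_left₀ (norm_nonneg _) h2
      rw [Matrix.l2_opNorm_conjTranspose] at h1' h2'
      nlinarith [norm_nonneg y]
    calc ‖toEuclideanLin (S + T)ᴴ y‖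
        = Real.sqrt (‖toEuclideanLin (S + T)ᴴ y‖ ^ 2) := by
          rw [Real.sqrt_sq (norm_nonneg _)]
      _ ≤ Real.sqrt ((‖S‖ ^ 2 + ‖T‖ ^ 2) * ‖y‖ ^ 2) := Real.sqrt_le_sqrt hb
      _ = Real.sqrt (‖S‖ ^ 2 + ‖T‖ ^ 2) * ‖y‖ := by
          rw [Real.sqrt_mul hc, Real.sqrt_sq (norm_nonneg _)]
  rw [Matrix.l2_opNorm_conjTranspose] at key
  calc ‖S + T‖ ^ 2 ≤ Real.sqrt (‖S‖ ^ 2 + ‖T‖ ^ 2) ^ 2 :=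
        pow_le_pow_left₀ (norm_nonneg _) key 2
    _ = ‖S‖ ^ 2 + ‖T‖ ^ 2 := Real.sq_sqrt hc

lemma mulVec_eq_zero (A : Matrix (Fin m) (Fin n) ℂ) (hA : A.rank = n)
    (v : Fin n → ℂ) (hv : A *ᵥ v = 0) : v = 0 := by
  have h1 : Module.finrank ℂ (LinearMap.range A.mulVecLin)
      + Module.finrank ℂ (LinearMap.ker A.mulVecLin)
      = Module.finrank ℂ (Fin n → ℂ) := LinearMap.finrank_range_add_finrank_ker _
  rw [Module.finrank_pi, Fintype.card_fin] at h1
  have hrank : Module.finrank ℂ (LinearMap.range A.mulVecLin) = n := hA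
  have hker : Module.finrank ℂ (LinearMap.ker A.mulVecLin) = 0 := by omega
  have hbot : LinearMap.ker A.mulVecLin = ⊥ := Submodule.finrank_eq_zero.1 hker
  have : v ∈ LinearMap.ker A.mulVecLin := by simpa [Matrix.mulVecLin] using hv
  simpa [hbot] using this

lemma euclid_eq_zero (A : Matrix (Fin m) (Fin n) ℂ) (hA : A.rank = n)
    (x : EuclideanSpace ℂ (Fin n)) (hx : toEuclideanLin A x = 0) : x = 0 := by
  have : A *ᵥ (WithLp.equiv 2 _ x) = 0 := by
    have := congrArg (WithLp.equiv 2 (Fin m → ℂ)) hx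
    simpa [Matrix.toEuclideanLin_apply] using this
  have h0 : (WithLp.equiv 2 (Fin n → ℂ)) x = 0 := mulVec_eq_zero A hA _ this
  simpa using congrArg (WithLp.equiv 2 (Fin n → ℂ)).symm h0

lemma isUnit_CT (B : Matrix (Fin m) (Fin n) ℂ)
    (h : ∀ z : EuclideanSpace ℂ (Fin n), toEuclideanLin B z = 0 → z = 0) :
    IsUnit (Bᴴ * B) := by
  rw [← Matrix.mulVec_injective_iff_isUnit]
  intro x y hxy
  set z : EuclideanSpace ℂ (Fin n) := (WithLp.equiv 2 (Fin n → ℂ)).symm (x - y) with hz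
  have h0 : toEuclideanLin (Bᴴ * B) z = 0 := by
    have hv : (Bᴴ * B) *ᵥ (x - y) = 0 := by
      rw [Matrix.mulVec_sub, hxy, sub_self]
    rw [hz]; show toEuclideanLin (Bᴴ * B) (WithLp.toLp 2 (x - y)) = 0; rw [Matrix.toEuclideanLin_apply_piLp_toLp, hv]
    simp
  have hB : toEuclideanLin B z = 0 := by
    have hi := inner_self_mul B z
    rw [h0, inner_zero_right] at hi
    have : (‖toEuclideanLin B z‖ : ℂ) ^ 2 = 0 := hi.symm
    have : ‖toEuclideanLin B z‖ = 0 := by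
      have := pow_eq_zero_iff (n := 2) (by norm_num) |>.1 this
      exact_mod_cast this
    exact norm_eq_zero.1 this
  have : z = 0 := h _ hB
  have hxy0 : x - y = 0 := by simpa [hz] using congrArg (WithLp.equiv 2 (Fin n → ℂ)) this
  exact sub_eq_zero.1 hxy0

lemma inv_norm_le (B : Matrix (Fin m) (Fin n) ℂ) {c : ℝ} (hc : 0 < c)
    (h : ∀ x : EuclideanSpace ℂ (Fin n), c * ‖x‖ ≤ ‖toEuclideanLin B x‖)
    (hU : IsUnit (Bᴴ * B)) : ‖(Bᴴ * B)⁻¹‖ ≤ 1 / c ^ 2 := by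
  apply norm_le_of_forall _ (by positivity)
  intro y
  set x := toEuclideanLin (Bᴴ * B)⁻¹ y with hx
  have hxy : toEuclideanLin (Bᴴ * B) x = y := by
    rw [hx, ← toEuclideanLin_mul,
      Matrix.mul_nonsing_inv _ ((Matrix.isUnit_iff_isUnit_det _).1 hU), toEuclideanLin_one]
  have h1 : c ^ 2 * ‖x‖ ^ 2 ≤ ‖toEuclideanLin B x‖ ^ 2 := by
    have hh := h x
    have hh' := mul_self_le_mul_self (by positivity) hh
    nlinarith [hh']
  have h2 : ‖toEuclideanLin B x‖ ^ 2 = (inner ℂ x y : ℂ).re := by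
    rw [← hxy, inner_self_mul]
    norm_cast
  have h3 : (inner ℂ x y : ℂ).re ≤ ‖x‖ * ‖y‖ := by
    calc (inner ℂ x y : ℂ).re ≤ ‖(inner ℂ x y : ℂ)‖ := Complex.re_le_norm _
      _ = ‖(inner ℂ x y : ℂ)‖ := rfl
      _ ≤ ‖x‖ * ‖y‖ := norm_inner_le_norm _ _
  have hkey : c ^ 2 * ‖x‖ ^ 2 ≤ ‖x‖ * ‖y‖ := by
    rw [h2] at h1; linarith
  rcases eq_or_lt_of_le (norm_nonneg x) with hx0 | hx0
  · exact hx0.symm.trans_le (by positivity)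
  · have : c ^ 2 * ‖x‖ ≤ ‖y‖ := by
      have := mul_le_mul_of_nonneg_right hkey (le_of_lt (inv_pos.2 hx0))
      calc c ^ 2 * ‖x‖ = c ^ 2 * ‖x‖ ^ 2 * ‖x‖⁻¹ := by
            field_simp
        _ ≤ ‖x‖ * ‖y‖ * ‖x‖⁻¹ := this
        _ = ‖y‖ := by field_simp
    rw [div_mul_eq_mul_div, le_div_iff₀ (by positivity)]
    linarith [this]

lemma lower_bound (A : Matrix (Fin m) (Fin n) ℂ) (hU : IsUnit (Aᴴ * A))
    (x : EuclideanSpace ℂ (Fin n)) : ‖x‖ ≤ ‖pinv A‖ * ‖toEuclideanLin A x‖ := by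
  have hx : x = toEuclideanLin (pinv A) (toEuclideanLin A x) := by
    rw [← toEuclideanLin_mul, pinv_mul A hU, toEuclideanLin_one]
  calc ‖x‖ = ‖toEuclideanLin (pinv A) (toEuclideanLin A x)‖ := by rw [← hx]
    _ ≤ ‖pinv A‖ * ‖toEuclideanLin A x‖ := apply_norm_le _ _

lemma sq_bound (X Y : Matrix (Fin m) (Fin n) ℂ) (hX : IsUnit (Xᴴ * X))
    (hY : IsUnit (Yᴴ * Y)) :
    ‖pinv Y - pinv X‖ ^ 2 ≤
      (‖Y - X‖ * ‖pinv Y‖ * ‖pinv X‖) ^ 2 + (‖Y - X‖ * (‖pinv Y‖ * ‖pinv Y‖)) ^ 2 := by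
  rw [key_identity X Y hX hY]
  refine le_trans (orth_norm _ _ (orth X Y hX)) (add_le_add ?_ ?_)
  · apply pow_le_pow_left₀ (norm_nonneg _)
    rw [norm_neg]
    calc ‖pinv Y * (Y - X) * pinv X‖ ≤ ‖pinv Y * (Y - X)‖ * ‖pinv X‖ :=
          Matrix.l2_opNorm_mul _ _
      _ ≤ ‖pinv Y‖ * ‖Y - X‖ * ‖pinv X‖ :=
          mul_le_mul_of_nonneg_right (Matrix.l2_opNorm_mul _ _) (norm_nonneg _)
      _ = ‖Y - X‖ * ‖pinv Y‖ * ‖pinv X‖ := by ring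
  · apply pow_le_pow_left₀ (norm_nonneg _)
    calc ‖(Yᴴ * Y)⁻¹ * (Y - X)ᴴ * (1 - X * pinv X)‖
        ≤ ‖(Yᴴ * Y)⁻¹ * (Y - X)ᴴ‖ * ‖(1 : Matrix (Fin m) (Fin m) ℂ) - X * pinv X‖ :=
          Matrix.l2_opNorm_mul _ _
      _ ≤ ‖(Yᴴ * Y)⁻¹ * (Y - X)ᴴ‖ * 1 :=
          mul_le_mul_of_nonneg_left (proj_norm_le X hX) (norm_nonneg _)
      _ = ‖(Yᴴ * Y)⁻¹ * (Y - X)ᴴ‖ := mul_one _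
      _ ≤ ‖(Yᴴ * Y)⁻¹‖ * ‖(Y - X)ᴴ‖ := Matrix.l2_opNorm_mul _ _
      _ = ‖Y - X‖ * (‖pinv Y‖ * ‖pinv Y‖) := by
          rw [pinv_sq_norm Y hY, Matrix.l2_opNorm_conjTranspose]; ring

lemma numeric (e x d bb H : ℝ) (he : 0 ≤ e) (hx : 0 < x) (hd : 0 < d) (hd1 : d ≤ 1)
    (hb0 : 0 ≤ bb) (hb : bb ≤ x / d) (hH : 0 ≤ H)
    (hkey : H ^ 2 ≤ (e * x * bb) ^ 2 + (e * (x * x)) ^ 2) :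
    H ≤ Real.sqrt 2 * (e * x / d) * x := by
  have hs : Real.sqrt 2 ^ 2 = 2 := Real.sq_sqrt (by norm_num)
  have hxd : 0 < x / d := div_pos hx hd
  have hxxd : x ≤ x / d := by
    rw [le_div_iff₀ hd]; nlinarith
  have hR0 : 0 ≤ Real.sqrt 2 * (e * x / d) * x := by positivity
  have t1 : (e * x * bb) ^ 2 ≤ (e * x * (x / d)) ^ 2 := by
    have h1 : e * x * bb ≤ e * x * (x / d) :=
      mul_le_mul_of_nonneg_left hb (by positivity)
    have h0 : 0 ≤ e * x * bb := by positivity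
    nlinarith
  have t2 : (e * (x * x)) ^ 2 ≤ (e * x * (x / d)) ^ 2 := by
    have h1 : e * (x * x) ≤ e * x * (x / d) := by
      calc e * (x * x) = e * x * x := by ring
        _ ≤ e * x * (x / d) := mul_le_mul_of_nonneg_left hxxd (by positivity)
    have h0 : 0 ≤ e * (x * x) := by positivity
    nlinarith
  have hsq : H ^ 2 ≤ (Real.sqrt 2 * (e * x / d) * x) ^ 2 := by
    have : (Real.sqrt 2 * (e * x / d) * x) ^ 2 = 2 * (e * x * (x / d)) ^ 2 := by
      rw [mul_pow, mul_pow, hs]; ring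
    rw [this]
    linarith
  have := Real.sqrt_le_sqrt hsq
  rwa [Real.sqrt_sq hH, Real.sqrt_sq hR0] at this

end WedinAux

open WedinAux Matrix in
/-- If `A, E` are `m×n` complex matrices, `m ≥ n`, `rank A = n`, and
`Δ = ‖E‖·‖A⁺‖ < 1`, then `H = (A+E)⁺ − A⁺` satisfies
`‖H‖ ≤ √2 · (Δ/(1−Δ)) · ‖A⁺‖`. -/
theorem rre_pinv_difference_bound (m n : ℕ) (hmn : n ≤ m)
    (A E : Matrix (Fin m) (Fin n) ℂ) (hA : A.rank = n)
    (hΔ : ‖E‖ * ‖pinv A‖ < 1) :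
    ‖pinv (A + E) - pinv A‖ ≤
      Real.sqrt 2 * (‖E‖ * ‖pinv A‖ / (1 - ‖E‖ * ‖pinv A‖)) * ‖pinv A‖ := by
  have hΔ0 : 0 ≤ ‖E‖ * ‖pinv A‖ := mul_nonneg (norm_nonneg _) (norm_nonneg _)
  have hδ : 0 < 1 - ‖E‖ * ‖pinv A‖ := by linarith
  have hRHS0 : 0 ≤ Real.sqrt 2 * (‖E‖ * ‖pinv A‖ / (1 - ‖E‖ * ‖pinv A‖)) * ‖pinv A‖ := by
    apply mul_nonneg (mul_nonneg (Real.sqrt_nonneg _) (div_nonneg hΔ0 (le_of_lt hδ)))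
      (norm_nonneg _)
  rcases Nat.eq_zero_or_pos n with hn | hn
  · subst hn
    have hz : pinv (A + E) - pinv A = 0 := Subsingleton.elim _ _
    rw [hz, norm_zero]
    exact hRHS0
  -- main case
  set e := ‖E‖ with he
  set α := ‖pinv A‖ with hα
  set δ := 1 - e * α with hδdef
  have hAU : IsUnit (Aᴴ * A) := isUnit_CT A (fun z hz => euclid_eq_zero A hA z hz)
  have hα0 : 0 < α := by
    rcases eq_or_lt_of_le (norm_nonneg (pinv A)) with h0 | h0
    · exfalso
      have hx1 : ‖(EuclideanSpace.single (⟨0, hn⟩ : Fin n) (1:ℂ) : EuclideanSpace ℂ (Fin n))‖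
          = 1 := by simp [EuclideanSpace.norm_single]
      have := lower_bound A hAU (EuclideanSpace.single (⟨0, hn⟩ : Fin n) (1:ℂ))
      rw [hx1, ← h0] at this
      simp at this
      linarith
    · exact h0
  have hlow : ∀ x : EuclideanSpace ℂ (Fin n),
      (δ / α) * ‖x‖ ≤ ‖toEuclideanLin (A + E) x‖ := by
    intro x
    have h1 : ‖x‖ ≤ α * ‖toEuclideanLin A x‖ := lower_bound A hAU x
    have hsplit : toEuclideanLin A x = toEuclideanLin (A + E) x - toEuclideanLin E x := by
      rw [map_add]; simp
    have h2 : ‖toEuclideanLin A x‖ ≤ ‖toEuclideanLin (A + E) x‖ + e * ‖x‖ := by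
      rw [hsplit]
      calc ‖toEuclideanLin (A + E) x - toEuclideanLin E x‖
          ≤ ‖toEuclideanLin (A + E) x‖ + ‖toEuclideanLin E x‖ := norm_sub_le _ _
        _ ≤ ‖toEuclideanLin (A + E) x‖ + e * ‖x‖ := by
            have := apply_norm_le E x; linarith
    have h3 : ‖x‖ ≤ α * ‖toEuclideanLin (A + E) x‖ + α * e * ‖x‖ := by
      calc ‖x‖ ≤ α * ‖toEuclideanLin A x‖ := h1
        _ ≤ α * (‖toEuclideanLin (A + E) x‖ + e * ‖x‖) := by
            exact mul_le_mul_of_nonneg_left h2 (le_of_lt hα0)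
        _ = α * ‖toEuclideanLin (A + E) x‖ + α * e * ‖x‖ := by ring
    have h4 : δ * ‖x‖ ≤ α * ‖toEuclideanLin (A + E) x‖ := by
      rw [hδdef]; nlinarith
    rw [div_mul_eq_mul_div, div_le_iff₀ hα0]
    nlinarith
  have hc0 : 0 < δ / α := div_pos hδ hα0
  have hBU : IsUnit ((A + E)ᴴ * (A + E)) := by
    apply isUnit_CT
    intro z hz
    have := hlow z
    rw [hz, norm_zero] at this
    have : ‖z‖ ≤ 0 := by nlinarith
    exact norm_le_zero_iff.1 this
  have hBinv : ‖((A + E)ᴴ * (A + E))⁻¹‖ ≤ 1 / (δ / α) ^ 2 :=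
    inv_norm_le (A + E) hc0 hlow hBU
  have hb2 : ‖pinv (A + E)‖ * ‖pinv (A + E)‖ ≤ (α / δ) ^ 2 := by
    rw [← pinv_sq_norm _ hBU]
    calc ‖((A + E)ᴴ * (A + E))⁻¹‖ ≤ 1 / (δ / α) ^ 2 := hBinv
      _ = (α / δ) ^ 2 := by
          rw [div_pow, div_pow, one_div_div]
  have hb : ‖pinv (A + E)‖ ≤ α / δ := by
    have haδ : 0 ≤ α / δ := le_of_lt (div_pos hα0 hδ)
    nlinarith [norm_nonneg (pinv (A + E))]
  -- apply sq_bound with X := A + E, Y := A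
  have hkey := sq_bound (A + E) A hBU hAU
  have hAme : ‖A - (A + E)‖ = e := by
    have : A - (A + E) = -E := by abel
    rw [this, norm_neg]
  rw [hAme] at hkey
  have hrev : ‖pinv (A + E) - pinv A‖ = ‖pinv A - pinv (A + E)‖ := norm_sub_rev _ _
  have hδ1 : δ ≤ 1 := by rw [hδdef]; linarith
  rw [hrev]
  exact numeric e α δ (‖pinv (A + E)‖) (‖pinv A - pinv (A + E)‖) (norm_nonneg E) hα0 hδ hδ1
    (norm_nonneg _) hb (norm_nonneg _) hkey
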